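/- Let F be an order-preserving, additively homogeneous, and diagonal free self-map of Tⁿ. Then S(F) := { x ∈ Tⁿ : x ≤ F(x) } contains a Hilbert ball B_H(z, r) with z ∈ ℝⁿ and r > 0 if and only if c̲w̲(F) > 0. Moreover, when S(F) contains a Hilbert ball of positive radius, the supremum of the radii r ≥ 0 such that B_H(z, r) ⊆ S(F) for some z ∈ ℝⁿ equals c̲w̲(F) (an equality in [0, +∞]). -/

import Mathlib

noncomputable section

variable {n : ℕ}

/-- The canonical embedding of `ℝⁿ` into `Tⁿ`. -/
def toT (x : Fin n → ℝ) : Fin n → WithBot ℝ := fun i => (x i : WithBot ℝ)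

/-- `F` is order-preserving. -/
def OrdPres (F : (Fin n → WithBot ℝ) → (Fin n → WithBot ℝ)) : Prop :=
  ∀ x y, x ≤ y → F x ≤ F y

/-- `F` is additively homogeneous. -/
def AddHomog (F : (Fin n → WithBot ℝ) → (Fin n → WithBot ℝ)) : Prop :=
  ∀ (c : ℝ) (x : Fin n → WithBot ℝ),
    F (fun i => (c : WithBot ℝ) + x i) = fun i => (c : WithBot ℝ) + F x i

/-- `F` is diagonal free: `F(x)_i` does not depend on `x_i` (on real vectors). -/
def DiagFree (F : (Fin n → WithBot ℝ) → (Fin n → WithBot ℝ)) : Prop :=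
  ∀ (i : Fin n) (x y : Fin n → ℝ), (∀ j, j ≠ i → x j = y j) →
    F (toT x) i = F (toT y) i

/-- Hilbert's seminorm `‖x‖_H = max_i x_i - min_i x_i` on `ℝⁿ`. -/
def hnorm (x : Fin n → ℝ) : ℝ := (⨆ i, x i) - (⨅ i, x i)

/-- The lower Collatz–Wielandt number of `F`, as an extended real. -/
def lcw (F : (Fin n → WithBot ℝ) → (Fin n → WithBot ℝ)) : EReal :=
  sSup ((fun μ : ℝ => (μ : EReal)) ''
    {μ : ℝ | ∃ z : Fin n → ℝ, ∀ i, ((μ + z i : ℝ) : WithBot ℝ) ≤ F (toT z) i})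

/-- A ball of radius `r` around `z` inside `S(F)` yields `F(z) ≥ r + z` (uses diag-freeness). -/
lemma ball_to_cw (F : (Fin n → WithBot ℝ) → (Fin n → WithBot ℝ)) (hdf : DiagFree F)
    (z : Fin n → ℝ) (r : ℝ) (hr : 0 ≤ r)
    (hb : ∀ x : Fin n → ℝ, hnorm (x - z) ≤ r → toT x ≤ F (toT x)) :
    ∀ i, ((r + z i : ℝ) : WithBot ℝ) ≤ F (toT z) i := by
  intro i
  have hne : Nonempty (Fin n) := ⟨i⟩
  set x : Fin n → ℝ := fun j => z j + if j = i then r else 0 with hxdef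
  have hxz : ∀ j, (x - z) j = if j = i then r else 0 := by
    intro j; simp [hxdef]
  have hh : hnorm (x - z) ≤ r := by
    unfold hnorm
    have h1 : (⨆ j, (x - z) j) ≤ r := by
      apply ciSup_le; intro j; rw [hxz]; split <;> simp [hr]
    have h2 : (0 : ℝ) ≤ ⨅ j, (x - z) j := by
      apply le_ciInf; intro j; rw [hxz]; split <;> simp [hr]
    linarith
  have hx := hb x hh i
  have hfi : F (toT x) i = F (toT z) i :=
    hdf i x z (fun j hj => by simp [hxdef, hj])
  rw [hfi] at hx
  have hxi : toT x i = ((r + z i : ℝ) : WithBot ℝ) := by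
    simp [toT, hxdef, add_comm]
  rwa [hxi] at hx

/-- `F(z) ≥ μ + z` yields that the ball of radius `μ` around `z` is in `S(F)`. -/
lemma cw_to_ball (F : (Fin n → WithBot ℝ) → (Fin n → WithBot ℝ))
    (hmono : OrdPres F) (hhom : AddHomog F)
    (z : Fin n → ℝ) (μ : ℝ)
    (hz : ∀ i, ((μ + z i : ℝ) : WithBot ℝ) ≤ F (toT z) i) :
    ∀ x : Fin n → ℝ, hnorm (x - z) ≤ μ → toT x ≤ F (toT x) := by
  intro x hx i
  have hne : Nonempty (Fin n) := ⟨i⟩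
  set lam := ⨆ j, (x - z) j with hlamdef
  set lam' := ⨅ j, (x - z) j with hlamdef'
  have hbdd : BddAbove (Set.range fun j => (x - z) j) :=
    Set.Finite.bddAbove (Set.finite_range _)
  have hbdd' : BddBelow (Set.range fun j => (x - z) j) :=
    Set.Finite.bddBelow (Set.finite_range _)
  have hlam : ∀ j, x j - z j ≤ lam := fun j => le_ciSup hbdd j
  have hlam' : ∀ j, lam' ≤ x j - z j := fun j => ciInf_le hbdd' j
  have hdiff : lam - lam' ≤ μ := hx
  have h1 : (fun j => ((lam' : ℝ) : WithBot ℝ) + toT z j) ≤ toT x := by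
    intro j
    have hj : lam' + z j ≤ x j := by have := hlam' j; linarith
    show ((lam' : ℝ) : WithBot ℝ) + ((z j : ℝ) : WithBot ℝ) ≤ ((x j : ℝ) : WithBot ℝ)
    rw [← WithBot.coe_add]
    exact_mod_cast hj
  have h2 := hmono _ _ h1
  rw [hhom] at h2
  have h3 : ((lam' : ℝ) : WithBot ℝ) + F (toT z) i ≤ F (toT x) i := h2 i
  have h4 : ((lam' : ℝ) : WithBot ℝ) + ((μ + z i : ℝ) : WithBot ℝ)
      ≤ ((lam' : ℝ) : WithBot ℝ) + F (toT z) i := add_le_add le_rfl (hz i)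
  have h5 : toT x i ≤ ((lam' + (μ + z i) : ℝ) : WithBot ℝ) := by
    show ((x i : ℝ) : WithBot ℝ) ≤ _
    have := hlam i
    exact_mod_cast (by linarith : x i ≤ lam' + (μ + z i))
  calc toT x i ≤ ((lam' + (μ + z i) : ℝ) : WithBot ℝ) := h5
    _ = ((lam' : ℝ) : WithBot ℝ) + ((μ + z i : ℝ) : WithBot ℝ) := by
        rw [← WithBot.coe_add]
    _ ≤ ((lam' : ℝ) : WithBot ℝ) + F (toT z) i := h4
    _ ≤ F (toT x) i := h3

/-- `S(F)` contains a Hilbert ball of positive radius iff `c̲w̲(F) > 0`, in which case the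
supremum of the radii of Hilbert balls contained in `S(F)` equals `c̲w̲(F)`
(an equality in `[0, +∞]`). -/
theorem stmt8 (F : (Fin n → WithBot ℝ) → (Fin n → WithBot ℝ))
    (hmono : OrdPres F) (hhom : AddHomog F) (hdf : DiagFree F) :
    ((∃ (z : Fin n → ℝ) (r : ℝ), 0 < r ∧
        ∀ x : Fin n → ℝ, hnorm (x - z) ≤ r → toT x ≤ F (toT x)) ↔ 0 < lcw F) ∧
    ((∃ (z : Fin n → ℝ) (r : ℝ), 0 < r ∧
        ∀ x : Fin n → ℝ, hnorm (x - z) ≤ r → toT x ≤ F (toT x)) →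
      sSup ((fun r : ℝ => (r : EReal)) ''
          {r : ℝ | 0 ≤ r ∧ ∃ z : Fin n → ℝ,
            ∀ x : Fin n → ℝ, hnorm (x - z) ≤ r → toT x ≤ F (toT x)}) = lcw F) := by
  have hmain : (∃ (z : Fin n → ℝ) (r : ℝ), 0 < r ∧
      ∀ x : Fin n → ℝ, hnorm (x - z) ≤ r → toT x ≤ F (toT x)) ↔ 0 < lcw F := by
    constructor
    · rintro ⟨z, r, hr, hball⟩
      have hcw := ball_to_cw F hdf z r hr.le hball
      have hmem : (r : EReal) ∈ ((fun μ : ℝ => (μ : EReal)) ''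
          {μ : ℝ | ∃ z : Fin n → ℝ, ∀ i, ((μ + z i : ℝ) : WithBot ℝ) ≤ F (toT z) i}) :=
        ⟨r, ⟨z, hcw⟩, rfl⟩
      have : (r : EReal) ≤ lcw F := le_sSup hmem
      exact lt_of_lt_of_le (by exact_mod_cast hr) this
    · intro h0
      obtain ⟨a, ha, h0a⟩ := lt_sSup_iff.mp h0
      obtain ⟨μ, ⟨z, hz⟩, rfl⟩ := ha
      have h0a' : (0 : EReal) < (μ : EReal) := h0a
      have hμ : (0 : ℝ) < μ := by exact_mod_cast h0a'
      exact ⟨z, μ, hμ, cw_to_ball F hmono hhom z μ hz⟩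
  refine ⟨hmain, ?_⟩
  rintro hex
  obtain ⟨z0, r0, hr0, hb0⟩ := hex
  apply le_antisymm
  · -- sup of radii ≤ lcw
    apply sSup_le
    rintro a ⟨r, ⟨hr, z, hball⟩, rfl⟩
    exact le_sSup ⟨r, ⟨z, ball_to_cw F hdf z r hr hball⟩, rfl⟩
  · -- lcw ≤ sup of radii
    apply sSup_le
    rintro a ⟨μ, ⟨z, hz⟩, rfl⟩
    by_cases hμ : 0 ≤ μ
    · exact le_sSup ⟨μ, ⟨hμ, z, cw_to_ball F hmono hhom z μ hz⟩, rfl⟩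
    · have h1 : (μ : EReal) ≤ (r0 : EReal) := by
        
        exact_mod_cast (le_of_lt (lt_of_lt_of_le (not_le.mp hμ) hr0.le))
      exact h1.trans (le_sSup ⟨r0, ⟨hr0.le, z0, hb0⟩, rfl⟩)
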